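/- Let G be the group presented by ⟨a, b, c | [a,[b⁻¹,c]], [b,[c⁻¹,a]]⟩ (the fundamental group of the Borromean rings link complement), and let p : G → F(α, β) be the homomorphism to the free group on two generators determined by p(a) = α, p(b) = β, p(c) = 1. Let A = ⟨a⟩ be the cyclic subgroup of G generated by a, and let B = p⁻¹(⟨β⟩) be the preimage of the cyclic subgroup generated by β. Then for every g ∈ G, the conjugate subgroup gAg⁻¹ intersects B trivially: gAg⁻¹ ∩ B = {1}. -/

import Mathlib

open scoped commutatorElement

/-- The relators `[a,[b⁻¹,c]]` and `[b,[c⁻¹,a]]` of the Borromean rings group, where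
`a = FreeGroup.of 0`, `b = FreeGroup.of 1`, `c = FreeGroup.of 2` and `⁅x, y⁆ = xyx⁻¹y⁻¹`. -/
def borromeanRels : Set (FreeGroup (Fin 3)) :=
  {⁅FreeGroup.of (0 : Fin 3), ⁅(FreeGroup.of (1 : Fin 3))⁻¹, FreeGroup.of (2 : Fin 3)⁆⁆,
   ⁅FreeGroup.of (1 : Fin 3), ⁅(FreeGroup.of (2 : Fin 3))⁻¹, FreeGroup.of (0 : Fin 3)⁆⁆}

/-- The fundamental group of the Borromean rings link complement,
`G = ⟨a, b, c ∣ [a,[b⁻¹,c]], [b,[c⁻¹,a]]⟩`. -/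
abbrev BorromeanGroup : Type := PresentedGroup borromeanRels

/-- Count of `α`-exponents: homomorphism `F(α,β) → ℤ` sending `α ↦ 1`, `β ↦ 0`. -/
def alphaCount : FreeGroup Bool →* Multiplicative ℤ :=
  FreeGroup.lift (fun t => Multiplicative.ofAdd (if t then 1 else 0))

/-- Let `p : G → F(α, β)` be the homomorphism with `p(a) = α`, `p(b) = β`, `p(c) = 1`
(where `α = FreeGroup.of true`, `β = FreeGroup.of false`). If `A = ⟨a⟩` and
`B = p⁻¹(⟨β⟩)`, then every conjugate of `A` intersects `B` trivially. -/
theorem stmt_8 (p : BorromeanGroup →* FreeGroup Bool)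
    (hpa : p (PresentedGroup.of 0) = FreeGroup.of true)
    (hpb : p (PresentedGroup.of 1) = FreeGroup.of false)
    (hpc : p (PresentedGroup.of 2) = 1) :
    ∀ g : BorromeanGroup,
      Subgroup.map (MulAut.conj g).toMonoidHom
          (Subgroup.zpowers (PresentedGroup.of 0)) ⊓
        Subgroup.comap p (Subgroup.zpowers (FreeGroup.of false)) = ⊥ := by
  intro g
  rw [eq_bot_iff]
  rintro x ⟨hx1, hx2⟩
  obtain ⟨y, hy, rfl⟩ := hx1
  obtain ⟨n, rfl⟩ := hy
  simp only [Subgroup.mem_comap, Subgroup.mem_zpowers_iff] at hx2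
  obtain ⟨m, hm⟩ := hx2
  have happ := congrArg alphaCount hm
  have hα : alphaCount (FreeGroup.of true) = Multiplicative.ofAdd 1 := by
    simp [alphaCount]
  have hβ : alphaCount (FreeGroup.of false) = Multiplicative.ofAdd 0 := by
    simp [alphaCount]
  simp only [MulEquiv.coe_toMonoidHom, MulAut.conj_apply, map_mul, map_inv, map_zpow,
    hpa, hα, hβ] at happ
  have hn : n = 0 := by
    have h2 := congrArg Multiplicative.toAdd happ
    simp only [toAdd_mul, toAdd_inv, toAdd_zpow, toAdd_ofAdd] at h2
    simpa using h2.symm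
  subst hn
  simp
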